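/- arXiv:1211.6261 — 3 statements merged into one kernel-verified Lean document; each statement's English description precedes it below -/
import Mathlib

section
/- Let n be a positive integer and G a subgroup of the symmetric group S_n, acting on integer vectors v ∈ ℕ^n by (σ·v)_i = v_{σ^{-1}(i)}. If an integer vector v of length n is not canonical under G (i.e., v is not the lexicographically greatest element of its G-orbit), then every child of v in the generation tree is also not canonical under G. -/
variable {n : ℕ}

/-- Action of a permutation on integer vectors, on positions: `(σ·v)_i = v_{σ⁻¹(i)}`. -/
def act (σ : Equiv.Perm (Fin n)) (v : Fin n → ℕ) : Fin n → ℕ := fun i => v (σ⁻¹ i)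

/-- `v` is canonical under `G` if it is the lexicographically greatest element of its orbit. -/
def IsCanonical (G : Subgroup (Equiv.Perm (Fin n))) (v : Fin n → ℕ) : Prop :=
  ∀ σ ∈ G, toLex (act σ v) ≤ toLex v

/-- Position of the last nonzero entry of `v` (position `0` if `v = 0`). -/
def lastNZ [NeZero n] (v : Fin n → ℕ) : Fin n :=
  if h : v = 0 then 0
  else ((Finset.univ : Finset (Fin n)).filter fun i => v i ≠ 0).max'
    (by obtain ⟨i, hi⟩ := Function.ne_iff.mp h
        exact ⟨i, Finset.mem_filter.mpr ⟨Finset.mem_univ i, hi⟩⟩)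

lemma act_sum (σ : Equiv.Perm (Fin n)) (v : Fin n → ℕ) :
    ∑ i, act σ v i = ∑ i, v i := Equiv.sum_comp σ⁻¹ v

lemma key (σ : Equiv.Perm (Fin n)) (v : Fin n → ℕ) (p : Fin n)
    (hp0 : ∀ i, p < i → v i = 0)
    (h : toLex v < toLex (act σ v)) :
    toLex (Function.update v p (v p + 1)) < toLex (act σ (Function.update v p (v p + 1))) := by
  obtain ⟨k, hk, hklt⟩ := h
  simp only [Pi.toLex_apply] at hk hklt
  set c := Function.update v p (v p + 1) with hc
  have hcp : c p = v p + 1 := Function.update_self _ _ _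
  have hcne : ∀ i, i ≠ p → c i = v i := fun i hi => Function.update_of_ne hi _ _
  have hact : ∀ w i, act σ w i = w (σ⁻¹ i) := fun _ _ => rfl
  -- first difference is at or before p
  have hkp : k ≤ p := by
    by_contra h'
    push_neg at h'
    have hlt : ∑ i, v i < ∑ i, act σ v i := by
      refine Finset.sum_lt_sum (fun i _ => ?_) ⟨k, Finset.mem_univ k, hklt⟩
      rcases lt_trichotomy i k with hik | hik | hik
      · exact (hk i hik).le
      · subst hik; exact hklt.le
      · have : v i = 0 := hp0 i (h'.trans hik)
        omega
    rw [act_sum] at hlt; omega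
  change Pi.Lex (· < ·) (· < ·) c (act σ c)
  rcases lt_trichotomy (σ p) p with hsp | hsp | hsp
  · -- σ p < p
    rcases lt_or_ge (σ p) k with h1 | h2
    · -- witness σ p
      refine ⟨σ p, fun j hj => ?_, ?_⟩
      · have hjp : j ≠ p := by exact ne_of_lt (lt_trans hj hsp)
        have hjs : σ⁻¹ j ≠ p := by
          intro hh
          have hjj : j = σ p := by rw [← hh]; simp
          exact absurd hjj (ne_of_lt hj)
        rw [hact, hcne _ hjs, hcne _ hjp]
        exact hk j (hj.trans h1)
      · have h3 : act σ c (σ p) = v p + 1 := by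
          rw [hact]; simp [hcp]
        have h4 : c (σ p) = v p := by
          rw [hcne _ (ne_of_lt hsp)]
          have h5 := hk (σ p) h1
          rw [hact] at h5
          simpa using h5
        rw [h3, h4]; omega
    · -- witness k
      have hkltp : k < p := lt_of_le_of_lt h2 hsp
      refine ⟨k, fun j hj => ?_, ?_⟩
      · have hjp : j ≠ p := ne_of_lt (hj.trans hkltp)
        have hjs : σ⁻¹ j ≠ p := by
          intro hh
          have : j = σ p := by rw [← hh]; simp
          exact absurd (this ▸ hj) (not_lt.mpr h2)
        rw [hact, hcne _ hjs, hcne _ hjp]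
        exact hk j hj
      · rw [hcne _ (ne_of_lt hkltp), hact]
        by_cases hh : σ⁻¹ k = p
        · rw [hh, hcp]
          have : act σ v k = v p := by rw [hact, hh]
          omega
        · rw [hcne _ hh]
          exact hklt
  · -- σ p = p
    have hkne : k ≠ p := by
      intro hh
      have : act σ v p = v p := by rw [hact]; congr 1; rw [Equiv.Perm.inv_eq_iff_eq]; exact hsp.symm
      rw [hh, this] at hklt; omega
    have hkltp : k < p := lt_of_le_of_ne hkp hkne
    refine ⟨k, fun j hj => ?_, ?_⟩
    · have hjp : j ≠ p := ne_of_lt (hj.trans hkltp)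
      have hjs : σ⁻¹ j ≠ p := by
        intro hh
        have : j = σ p := by rw [← hh]; simp
        exact hjp (this.trans hsp)
      rw [hact, hcne _ hjs, hcne _ hjp]
      exact hk j hj
    · have hks : σ⁻¹ k ≠ p := by
        intro hh
        have : k = σ p := by rw [← hh]; simp
        exact hkne (this.trans hsp)
      rw [hact, hcne _ hks, hcne _ hkne]
      exact hklt
  · -- p < σ p
    rcases lt_or_eq_of_le hkp with hkltp | hkeq
    · -- witness k
      refine ⟨k, fun j hj => ?_, ?_⟩
      · have hjp : j ≠ p := ne_of_lt (hj.trans hkltp)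
        have hjs : σ⁻¹ j ≠ p := by
          intro hh
          have : j = σ p := by rw [← hh]; simp
          exact absurd (this ▸ (hj.trans hkltp)) (not_lt.mpr hsp.le)
        rw [hact, hcne _ hjs, hcne _ hjp]
        exact hk j hj
      · have hks : σ⁻¹ k ≠ p := by
          intro hh
          have : k = σ p := by rw [← hh]; simp
          exact absurd (this ▸ hkltp) (not_lt.mpr hsp.le)
        rw [hact, hcne _ hks, hcne _ (ne_of_lt hkltp)]
        exact hklt
    · -- k = p : pointwise argument
      subst hkeq
      have hle : c < act σ c := by
        rw [Pi.lt_def]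
        constructor
        · intro i
          rcases lt_trichotomy i k with hik | hik | hik
          · have hip : σ⁻¹ i ≠ k := by
              intro hh
              have hi : i = σ k := by rw [← hh]; simp
              exact absurd (hi ▸ hik) (not_lt.mpr hsp.le)
            rw [hact, hcne _ hip, hcne _ (ne_of_lt hik)]
            exact (hk i hik).le
          · subst hik
            have hip : σ⁻¹ i ≠ i := by
              intro hh
              have hi : i = σ i := by simpa using congrArg σ hh
              exact absurd hi.symm (ne_of_gt hsp)
            rw [hact, hcne _ hip, hcp]
            exact (hklt : v i < v (σ⁻¹ i))
          · have h0 : c i = 0 := by rw [hcne _ (ne_of_gt hik)]; exact hp0 i hik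
            rw [h0]; exact Nat.zero_le _
        · refine ⟨σ k, ?_⟩
          have h1 : act σ c (σ k) = v k + 1 := by rw [hact]; simp [hcp]
          have h2 : c (σ k) = 0 := by
            rw [hcne _ (ne_of_gt hsp)]; exact hp0 _ hsp
          rw [h1, h2]; omega
      exact Pi.lex_lt_of_lt (wellFounded_lt) hle

/-- The father of a vector: decrement its last nonzero entry (fixes the zero vector). -/
def father [NeZero n] (v : Fin n → ℕ) : Fin n → ℕ :=
  Function.update v (lastNZ v) (v (lastNZ v) - 1)

/-- The children of a vector: increment the last nonzero entry, or set a later entry to 1. -/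
def children [NeZero n] (v : Fin n → ℕ) : Set (Fin n → ℕ) :=
  insert (Function.update v (lastNZ v) (v (lastNZ v) + 1))
    {w | ∃ j : Fin n, lastNZ v < j ∧ w = Function.update v j 1}

lemma lastNZ_zero [NeZero n] (v : Fin n → ℕ) {i : Fin n} (hi : lastNZ v < i) : v i = 0 := by
  by_contra h
  have hv : v ≠ 0 := fun hh => h (by rw [hh]; rfl)
  rw [lastNZ, dif_neg hv] at hi
  exact absurd (Finset.le_max' _ i (Finset.mem_filter.mpr ⟨Finset.mem_univ i, h⟩))
    (not_le.mpr hi)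


/-- If an integer vector `v` is not canonical under `G`, then every child of `v`
in the generation tree is also not canonical under `G`. -/
theorem stmt0 (n : ℕ) [NeZero n] (G : Subgroup (Equiv.Perm (Fin n)))
    (v : Fin n → ℕ) (hv : ¬ IsCanonical G v) :
    ∀ c ∈ children v, ¬ IsCanonical G c := by
  rw [IsCanonical] at hv
  push_neg at hv
  obtain ⟨σ, hσG, hσ⟩ := hv
  have hlt : toLex v < toLex (act σ v) := by
    rcases lt_trichotomy (toLex (act σ v)) (toLex v) with h | h | h
    · exact absurd h.le hσ.not_ge
    · exact absurd h.le hσ.not_ge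
    · exact h
  intro c hc hcan
  have hcσ := hcan σ hσG
  rcases hc with hc | ⟨j, hj, hc⟩
  · have hkey := key σ v (lastNZ v) (fun i hi => lastNZ_zero v hi) hlt
    rw [← hc] at hkey
    exact absurd hcσ (show toLex c < toLex (act σ c) from hkey).not_ge
  · have hvj : v j = 0 := lastNZ_zero v hj
    have hkey := key σ v j (fun i hi => lastNZ_zero v (hj.trans hi)) hlt
    rw [hvj] at hkey
    norm_num at hkey
    rw [← hc] at hkey
    exact absurd hcσ (show toLex c < toLex (act σ c) from hkey).not_ge
end

section
/- Let n be a positive integer and G a subgroup of S_n acting on ℕ^n on positions. If a nonzero integer vector v of length n is canonical under G, then its father in the generation tree is also canonical under G. Consequently the canonical vectors form a prefix tree: every iterated father of a canonical vector is canonical, down to the root (0,…,0). -/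
variable {n : ℕ}

lemma lastNZ_ne [NeZero n] {v : Fin n → ℕ} (hv : v ≠ 0) : v (lastNZ v) ≠ 0 := by
  rw [lastNZ, dif_neg hv]
  have := Finset.max'_mem ((Finset.univ : Finset (Fin n)).filter fun i => v i ≠ 0)
    (by obtain ⟨i, hi⟩ := Function.ne_iff.mp hv
        exact ⟨i, Finset.mem_filter.mpr ⟨Finset.mem_univ i, hi⟩⟩)
  exact (Finset.mem_filter.mp this).2

lemma lastNZ_gt [NeZero n] {v : Fin n → ℕ} (hv : v ≠ 0) {i : Fin n} (hi : lastNZ v < i) :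
    v i = 0 := by
  by_contra hne
  rw [lastNZ, dif_neg hv] at hi
  exact absurd (Finset.le_max' _ i (Finset.mem_filter.mpr ⟨Finset.mem_univ i, hne⟩))
    (not_le.mpr hi)

lemma zero_canonical [NeZero n] (G : Subgroup (Equiv.Perm (Fin n))) :
    IsCanonical G (0 : Fin n → ℕ) := by
  intro σ _
  have : act σ (0 : Fin n → ℕ) = 0 := funext fun i => rfl
  rw [this]

lemma father_zero [NeZero n] : father (0 : Fin n → ℕ) = 0 := by
  funext i
  simp [father, Function.update_apply]

lemma key_s1 [NeZero n] {v : Fin n → ℕ} (hv : v ≠ 0) (σ : Equiv.Perm (Fin n))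
    (hσ : toLex (act σ v) ≤ toLex v) :
    toLex (act σ (father v)) ≤ toLex (father v) := by
  set ℓ := lastNZ v with hℓdef
  set v' := father v with hv'def
  set w := act σ v with hwdef
  set w' := act σ v' with hw'def
  have hvl : v ℓ ≠ 0 := lastNZ_ne hv
  have htail : ∀ i : Fin n, ℓ < i → v i = 0 := fun i hi => lastNZ_gt hv hi
  have hv'app : ∀ i : Fin n, i ≠ ℓ → v' i = v i := fun i hi =>
    Function.update_of_ne hi _ _
  have hv'ℓ : v' ℓ = v ℓ - 1 := Function.update_self _ _ _
  have hw'app : ∀ i : Fin n, i ≠ σ ℓ → w' i = w i := by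
    intro i hi
    have : σ⁻¹ i ≠ ℓ := fun hc => hi (hc ▸ (σ.apply_symm_apply i : σ (σ⁻¹ i) = i).symm)
    exact hv'app _ this
  have hwσℓ : w (σ ℓ) = v ℓ := by
    show v (σ⁻¹ (σ ℓ)) = v ℓ
    rw [show σ⁻¹ (σ ℓ) = ℓ from σ.symm_apply_apply ℓ]
  have hw'σℓ : w' (σ ℓ) = v ℓ - 1 := by
    show v' (σ⁻¹ (σ ℓ)) = v ℓ - 1
    rw [show σ⁻¹ (σ ℓ) = ℓ from σ.symm_apply_apply ℓ, hv'ℓ]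
  by_contra hcon
  have hlt : toLex v' < toLex w' := by
    rcases @trichotomous_of _ _ (Pi.isTrichotomous_lex (β := fun _ : Fin n => ℕ) (· < ·) (fun {_} => (· < ·))
        (IsWellFounded.wf : WellFounded ((·<·) : Fin n → Fin n → Prop))) v' w'
      with h' | h' | h'
    · exact h'
    · exact absurd (le_of_eq (congrArg toLex h'.symm)) hcon
    · exact absurd (le_of_lt (h' : toLex w' < toLex v')) hcon
  have habs : toLex v < toLex w → False := fun p => lt_irrefl _ (p.trans_le hσ)
  obtain ⟨j, hj1, hj2⟩ : ∃ j, (∀ i, i < j → v' i = w' i) ∧ v' j < w' j := hlt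
  -- Case I : ℓ < j : sum argument
  rcases lt_or_ge ℓ j with hcase | hcase
  · have hzero : ∀ i : Fin n, ¬ i < j → v' i = 0 := by
      intro i hi
      have hℓi : ℓ < i := lt_of_lt_of_le hcase (not_lt.mp hi)
      rw [hv'app i (ne_of_gt hℓi)]
      exact htail i hℓi
    have hsum : ∑ i, w' i = ∑ i, v' i := Equiv.sum_comp σ⁻¹ v'
    have h1 : ∑ i ∈ Finset.univ.filter (fun i => ¬ i < j), v' i = 0 :=
      Finset.sum_eq_zero fun i hi => hzero i (Finset.mem_filter.mp hi).2
    have h2 : ∑ i ∈ Finset.univ.filter (fun i => i < j), w' i =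
        ∑ i ∈ Finset.univ.filter (fun i => i < j), v' i :=
      Finset.sum_congr rfl fun i hi => (hj1 i (Finset.mem_filter.mp hi).2).symm
    have h3 := Finset.sum_filter_add_sum_filter_not Finset.univ (fun i => i < j) w'
    have h4 := Finset.sum_filter_add_sum_filter_not Finset.univ (fun i => i < j) v'
    have h5 : ∑ i ∈ Finset.univ.filter (fun i => ¬ i < j), w' i = 0 := by omega
    have hj0 : w' j = 0 := by
      have := (Finset.sum_eq_zero_iff.mp h5) j
        (Finset.mem_filter.mpr ⟨Finset.mem_univ j, lt_irrefl j⟩)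
      exact this
    omega
  -- Case II : j ≤ ℓ
  · rcases lt_or_ge (σ ℓ) j with hs | hs
    -- s < j
    · have hsℓ : σ ℓ ≠ ℓ := ne_of_lt (lt_of_lt_of_le hs hcase)
      have hk1 : ∀ i, i < σ ℓ → v i = w i := by
        intro i hi
        have hij : i < j := lt_trans hi hs
        have hiℓ : i ≠ ℓ := ne_of_lt (lt_of_lt_of_le hij hcase)
        rw [← hv'app i hiℓ, hj1 i hij, hw'app i (ne_of_lt hi)]
      have hk2 : v (σ ℓ) < w (σ ℓ) := by
        rw [hwσℓ, ← hv'app _ hsℓ, hj1 _ hs, hw'σℓ]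
        omega
      exact habs ⟨σ ℓ, hk1, hk2⟩
    -- j ≤ s
    · have hbase : ∀ i, i < j → v i = w i := by
        intro i hi
        have hiℓ : i ≠ ℓ := ne_of_lt (lt_of_lt_of_le hi hcase)
        have his : i ≠ σ ℓ := ne_of_lt (lt_of_lt_of_le hi hs)
        rw [← hv'app i hiℓ, hj1 i hi, hw'app i his]
      rcases eq_or_lt_of_le hs with hjs | hjs
      -- j = σ ℓ
      · rcases eq_or_ne j ℓ with hjl | hjl
        · have e1 : v' j = v ℓ - 1 := by rw [hjl]; exact hv'ℓ
          have e2 : w' j = v ℓ - 1 := by rw [hjs]; exact hw'σℓ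
          omega
        · have hvj : v j = v' j := (hv'app j hjl).symm
          have hwj : w j = v ℓ := by rw [hjs]; exact hwσℓ
          have hw'j : w' j = v ℓ - 1 := by rw [hjs]; exact hw'σℓ
          have : v j < w j := by rw [hvj, hwj]; omega
          exact habs ⟨j, hbase, this⟩
      -- j < σ ℓ
      · have hw'w : w' j = w j := hw'app j (ne_of_lt hjs)
        rcases eq_or_ne j ℓ with hjl | hjl
        · have e1 : v' j = v ℓ - 1 := by rw [hjl]; exact hv'ℓ
          have e2 : v j = v ℓ := by rw [hjl]
          rw [e1, hw'w] at hj2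
          have hle2 : v j ≤ w j := by omega
          rcases lt_or_eq_of_le hle2 with hlt2 | heq2
          · exact habs ⟨j, hbase, hlt2⟩
          · have hℓs : ℓ < σ ℓ := hjl ▸ hjs
            rcases hσ.lt_or_eq with hwv | hwv
            · obtain ⟨k, hk1, hk2⟩ : ∃ k, (∀ i, i < k → w i = v i) ∧ w k < v k := hwv
              rcases le_or_gt k j with hkj | hkj
              · rcases lt_or_eq_of_le hkj with h' | h'
                · exact absurd (hbase k h').symm (ne_of_lt hk2)
                · rw [h'] at hk2; omega
              · have hℓk : ℓ < k := hjl ▸ hkj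
                rw [htail k hℓk] at hk2
                exact absurd hk2 (Nat.not_lt_zero _)
            · have hweq : w = v := congrArg ofLex hwv
              have h6 : w (σ ℓ) = v (σ ℓ) := congrFun hweq (σ ℓ)
              rw [hwσℓ, htail (σ ℓ) hℓs] at h6
              exact hvl h6
        · have hvj : v j = v' j := (hv'app j hjl).symm
          have : v j < w j := by rw [hvj, ← hw'w]; exact hj2
          exact habs ⟨j, hbase, this⟩

lemma father_canonical [NeZero n] {G : Subgroup (Equiv.Perm (Fin n))} {v : Fin n → ℕ}
    (h : IsCanonical G v) : IsCanonical G (father v) := by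
  by_cases hv : v = 0
  · subst hv; rw [father_zero]; exact h
  · exact fun σ hσ => key_s1 hv σ (h σ hσ)

/-- If a nonzero vector `v` is canonical under `G` then its father is canonical;
consequently every iterated father of a canonical vector (down to the root `0`)
is canonical. -/
theorem stmt1 (n : ℕ) [NeZero n] (G : Subgroup (Equiv.Perm (Fin n)))
    (v : Fin n → ℕ) (hv : v ≠ 0) (h : IsCanonical G v) :
    IsCanonical G (father v) ∧ ∀ k : ℕ, IsCanonical G (father^[k] v) := by
  refine ⟨father_canonical h, fun k => ?_⟩
  induction k with
  | zero => exact h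
  | succ k ih => rw [Function.iterate_succ_apply']; exact father_canonical ih
end

section
/- Let n be a positive integer, G a subgroup of S_n, and let v = (n−1, n−2, …, 1, 0) be the staircase vector. Consider the polynomial P := Σ_{w ∈ G·v} x^w in ℚ[x_1,…,x_n], the orbit sum of the monomial x_1^{n−1} x_2^{n−2} ⋯ x_{n−1}. Then the stabilizer of P in S_n equals G: {σ ∈ S_n : σ·P = P} = G. -/
open MvPolynomial

/-- Action of a permutation on exponent vectors (Finsupp version):
`(σ·w)_i = w_{σ⁻¹(i)}`; it matches the action on monomials by renaming variables. -/
def actExp {n : ℕ} (σ : Equiv.Perm (Fin n)) (w : Fin n →₀ ℕ) : Fin n →₀ ℕ :=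
  Finsupp.equivMapDomain σ w

/-- The staircase exponent vector `(n−1, n−2, …, 1, 0)`. -/
noncomputable def stairExp (n : ℕ) : Fin n →₀ ℕ :=
  Finsupp.equivFunOnFinite.symm fun i : Fin n => n - 1 - (i : ℕ)

/-- The orbit sum `Σ_{w ∈ G·a} x^w` of the monomial `x^a` under `G`. -/
noncomputable def orbitSum {n : ℕ} (G : Subgroup (Equiv.Perm (Fin n)))
    (a : Fin n →₀ ℕ) : MvPolynomial (Fin n) ℚ :=
  ∑ᶠ w ∈ {w : Fin n →₀ ℕ | ∃ σ ∈ G, actExp σ a = w}, monomial w (1 : ℚ)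

lemma actExp_apply {n : ℕ} (σ : Equiv.Perm (Fin n)) (w : Fin n →₀ ℕ) (i : Fin n) :
    actExp σ w i = w (σ⁻¹ i) := rfl

lemma actExp_mul {n : ℕ} (σ τ : Equiv.Perm (Fin n)) (w : Fin n →₀ ℕ) :
    actExp (σ * τ) w = actExp σ (actExp τ w) := by
  ext i; rfl

lemma actExp_one {n : ℕ} (w : Fin n →₀ ℕ) : actExp 1 w = w := by ext i; rfl

open Classical in
lemma coeff_orbitSum {n : ℕ} (G : Subgroup (Equiv.Perm (Fin n))) (a w : Fin n →₀ ℕ) :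
    coeff w (orbitSum G a) = if ∃ σ ∈ G, actExp σ a = w then 1 else 0 := by
  classical
  have hS : ({w : Fin n →₀ ℕ | ∃ σ ∈ G, actExp σ a = w}).Finite := by
    apply Set.Finite.subset (Set.finite_range (fun σ : Equiv.Perm (Fin n) => actExp σ a))
    rintro x ⟨σ, _, h⟩; exact ⟨σ, h⟩
  rw [orbitSum, ← Set.Finite.coe_toFinset hS, finsum_mem_coe_finset]
  rw [MvPolynomial.coeff_sum]
  simp only [coeff_monomial]
  rw [Finset.sum_ite_eq' hS.toFinset w (fun _ => (1:ℚ))]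
  simp [Set.Finite.mem_toFinset]

lemma coeff_rename_perm {n : ℕ} (σ : Equiv.Perm (Fin n)) (P : MvPolynomial (Fin n) ℚ)
    (w : Fin n →₀ ℕ) : coeff w (rename σ P) = coeff (actExp σ⁻¹ w) P := by
  have h : Finsupp.mapDomain σ (actExp σ⁻¹ w) = w := by
    rw [← Finsupp.equivMapDomain_eq_mapDomain]
    ext i
    simp [actExp, Finsupp.equivMapDomain_apply]
    rw [Equiv.Perm.inv_def, Equiv.symm_symm, Equiv.apply_symm_apply]
  conv_lhs => rw [← h]
  exact MvPolynomial.coeff_rename_mapDomain σ σ.injective P _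

lemma stair_inj {n : ℕ} {σ τ : Equiv.Perm (Fin n)}
    (h : actExp σ (stairExp n) = actExp τ (stairExp n)) : σ = τ := by
  have hv : ∀ i j : Fin n, stairExp n i = stairExp n j → i = j := by
    intro i j hij
    have hi := i.isLt; have hj := j.isLt
    change (n - 1 - (i : ℕ)) = n - 1 - (j : ℕ) at hij
    exact Fin.ext (by omega)
  have : ∀ i, σ⁻¹ i = τ⁻¹ i := by
    intro i
    have := congrArg (fun f : Fin n →₀ ℕ => f i) h
    exact hv _ _ this
  have hinv : σ⁻¹ = τ⁻¹ := Equiv.ext this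
  exact inv_injective hinv

/-- The stabilizer in `S_n` (acting by permuting variables by position, i.e. by
`rename`) of the orbit sum of the staircase monomial
`x_1^{n−1} x_2^{n−2} ⋯ x_{n−1}` is exactly `G`. -/
theorem stmt14 (n : ℕ) (hn : 0 < n) (G : Subgroup (Equiv.Perm (Fin n))) :
    {σ : Equiv.Perm (Fin n) |
        rename σ (orbitSum G (stairExp n)) = orbitSum G (stairExp n)} =
      (G : Set (Equiv.Perm (Fin n))) := by
  classical
  ext σ
  simp only [Set.mem_setOf_eq, SetLike.mem_coe]
  constructor
  · intro h
    have h1 : coeff (actExp σ (stairExp n)) (rename σ (orbitSum G (stairExp n))) = 1 := by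
      rw [coeff_rename_perm, ← actExp_mul, inv_mul_cancel, actExp_one, coeff_orbitSum]
      rw [if_pos ⟨1, G.one_mem, actExp_one _⟩]
    rw [h, coeff_orbitSum] at h1
    by_cases hc : ∃ τ ∈ G, actExp τ (stairExp n) = actExp σ (stairExp n)
    · obtain ⟨τ, hτ, he⟩ := hc
      rwa [← stair_inj he]
    · rw [if_neg hc] at h1; norm_num at h1
  · intro hσ
    apply MvPolynomial.ext
    intro w
    rw [coeff_rename_perm, coeff_orbitSum, coeff_orbitSum]
    congr 1
    apply propext
    constructor
    · rintro ⟨τ, hτ, he⟩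
      refine ⟨σ * τ, G.mul_mem hσ hτ, ?_⟩
      rw [actExp_mul, he, ← actExp_mul, mul_inv_cancel, actExp_one]
    · rintro ⟨τ, hτ, he⟩
      exact ⟨σ⁻¹ * τ, G.mul_mem (G.inv_mem hσ) hτ, by rw [actExp_mul, he]⟩
end
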